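/- For any square matrices A, B, X (all n×n), σ(AX − XB) ≺_w 2 δ(A, B) · σ(X) entrywise after decreasing ordering; here δ(A,B) is defined by Σ_{i=1}^k δ_i(A,B) = min_{α∈ℂ} (‖A − αI‖_(k) + ‖B − αI‖_(k))/2. -/

import Mathlib

open scoped InnerProductSpace ComplexOrder Matrix

/-- Singular values of a square complex matrix (in some fixed order). -/
noncomputable def singVals {n : ℕ} (A : Matrix (Fin n) (Fin n) ℂ) : Fin n → ℝ :=
  fun i => Real.sqrt ((Matrix.posSemidef_conjTranspose_mul_self A).1.eigenvalues i)

/-- Sum of the `k` largest entries of a vector: supremum of sums over subsets of size `k`. -/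
noncomputable def sumK {n : ℕ} (f : Fin n → ℝ) (k : ℕ) : ℝ :=
  sSup {x | ∃ s : Finset (Fin n), s.card = k ∧ x = ∑ i ∈ s, f i}

/-- The Ky-Fan `k`-norm: sum of the `k` largest singular values. -/
noncomputable def kyFan {n : ℕ} (A : Matrix (Fin n) (Fin n) ℂ) (k : ℕ) : ℝ :=
  sumK (singVals A) k

/-- The `k`-th discrepancy norm, via its minimal characterization. -/
noncomputable def discNorm {n : ℕ} (A : Matrix (Fin n) (Fin n) ℂ) (k : ℕ) : ℝ :=
  sInf {x | ∃ α : ℂ, x = kyFan (A - α • 1) k}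

/-- The vector of discrepancy values. -/
noncomputable def discVals {n : ℕ} (A : Matrix (Fin n) (Fin n) ℂ) : Fin n → ℝ :=
  fun i => discNorm A (i.1 + 1) - discNorm A i.1

/-- Weak majorization of vectors. -/
def WeakMaj {n : ℕ} (f g : Fin n → ℝ) : Prop :=
  ∀ k : ℕ, sumK f k ≤ sumK g k

/-- Decreasing rearrangement of a vector. -/
noncomputable def sortDesc {n : ℕ} (f : Fin n → ℝ) : Fin n → ℝ :=
  fun i => f (Tuple.sort f i.rev)

/-- The joint discrepancy norm of a pair of matrices. -/
noncomputable def discNorm2 {n : ℕ} (A B : Matrix (Fin n) (Fin n) ℂ) (k : ℕ) : ℝ :=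
  sInf {x | ∃ α : ℂ, x = (kyFan (A - α • 1) k + kyFan (B - α • 1) k) / 2}

/-- The joint discrepancy values of a pair of matrices. -/
noncomputable def discVals2 {n : ℕ} (A B : Matrix (Fin n) (Fin n) ℂ) : Fin n → ℝ :=
  fun i => discNorm2 A B (i.1 + 1) - discNorm2 A B i.1

namespace GC

variable {n : ℕ}

lemma sumK_bdd (f : Fin n → ℝ) (k : ℕ) :
    BddAbove {x | ∃ s : Finset (Fin n), s.card = k ∧ x = ∑ i ∈ s, f i} := by
  apply Set.Finite.bddAbove
  apply (Set.finite_range (fun s : Finset (Fin n) => ∑ i ∈ s, f i)).subset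
  rintro x ⟨s, -, rfl⟩
  exact ⟨s, rfl⟩

lemma le_sumK (f : Fin n → ℝ) {k : ℕ} {s : Finset (Fin n)} (h : s.card = k) :
    ∑ i ∈ s, f i ≤ sumK f k :=
  le_csSup (sumK_bdd f k) ⟨s, h, rfl⟩

lemma sumK_le {f : Fin n → ℝ} {k : ℕ} {c : ℝ} (hk : k ≤ n)
    (h : ∀ s : Finset (Fin n), s.card = k → ∑ i ∈ s, f i ≤ c) : sumK f k ≤ c := by
  apply csSup_le
  · obtain ⟨t, -, ht⟩ := Finset.exists_subset_card_eq (s := (Finset.univ : Finset (Fin n))) (n := k)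
      (by simpa using hk)
    exact ⟨∑ i ∈ t, f i, t, ht, rfl⟩
  · rintro x ⟨s, hs, rfl⟩
    exact h s hs

lemma sumK_of_gt {f : Fin n → ℝ} {k : ℕ} (hk : n < k) : sumK f k = 0 := by
  have : {x | ∃ s : Finset (Fin n), s.card = k ∧ x = ∑ i ∈ s, f i} = ∅ := by
    ext x
    simp only [Set.mem_setOf_eq, Set.mem_empty_iff_false, iff_false, not_exists]
    rintro s ⟨hs, -⟩
    have := s.card_le_univ
    simp [hs] at this
    omega
  rw [sumK, this, Real.sSup_empty]

lemma sumK_zero (f : Fin n → ℝ) : sumK f 0 = 0 := by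
  have : {x | ∃ s : Finset (Fin n), s.card = 0 ∧ x = ∑ i ∈ s, f i} = {0} := by
    ext x
    simp only [Set.mem_setOf_eq, Set.mem_singleton_iff, Finset.card_eq_zero]
    constructor
    · rintro ⟨s, rfl, rfl⟩; simp
    · rintro rfl; exact ⟨∅, rfl, by simp⟩
  rw [sumK, this, csSup_singleton]

lemma sumK_nonneg {f : Fin n → ℝ} (hf : ∀ i, 0 ≤ f i) (k : ℕ) : 0 ≤ sumK f k := by
  rcases le_or_gt k n with hk | hk
  · obtain ⟨t, -, ht⟩ := Finset.exists_subset_card_eq (s := (Finset.univ : Finset (Fin n))) (n := k)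
      (by simpa using hk)
    exact le_trans (Finset.sum_nonneg fun i _ => hf i) (le_sumK f ht)
  · rw [sumK_of_gt hk]

lemma sumK_perm (f : Fin n → ℝ) (e : Equiv.Perm (Fin n)) (k : ℕ) :
    sumK (f ∘ e) k = sumK f k := by
  unfold sumK
  congr 1
  ext x
  constructor
  · rintro ⟨s, hs, rfl⟩
    refine ⟨s.map e.toEmbedding, by simp [hs], ?_⟩
    rw [Finset.sum_map]
    rfl
  · rintro ⟨s, hs, rfl⟩
    refine ⟨s.map e.symm.toEmbedding, by simp [hs], ?_⟩
    rw [Finset.sum_map]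
    simp [Function.comp]

lemma sumK_mono {f : Fin n → ℝ} (hf : ∀ i, 0 ≤ f i) {k l : ℕ} (hkl : k ≤ l) (hl : l ≤ n) :
    sumK f k ≤ sumK f l := by
  apply sumK_le (le_trans hkl hl)
  intro s hs
  obtain ⟨t, hst, -, ht⟩ := Finset.exists_subsuperset_card_eq s.subset_univ
    (show s.card ≤ l by omega) (show l ≤ (Finset.univ : Finset (Fin n)).card by simpa using hl)
  calc ∑ i ∈ s, f i ≤ ∑ i ∈ t, f i :=
        Finset.sum_le_sum_of_subset_of_nonneg hst (fun i _ _ => hf i)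
    _ ≤ sumK f l := le_sumK f ht

lemma sumK_concave (f : Fin n → ℝ) {k : ℕ} (hk : k + 2 ≤ n) :
    sumK f (k + 2) + sumK f k ≤ 2 * sumK f (k + 1) := by
  have key : ∀ s t : Finset (Fin n), s.card = k + 2 → t.card = k →
      ∑ i ∈ s, f i + ∑ i ∈ t, f i ≤ 2 * sumK f (k + 1) := by
    intro s t hs ht
    obtain ⟨x, hxs, hxt⟩ : ∃ x ∈ s, x ∉ t := by
      by_contra hcon
      push_neg at hcon
      have := Finset.card_le_card hcon
      omega
    have h1 : ∑ i ∈ s, f i = ∑ i ∈ s.erase x, f i + f x :=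
      (Finset.sum_erase_add s f hxs).symm
    have h2 : ∑ i ∈ insert x t, f i = f x + ∑ i ∈ t, f i :=
      Finset.sum_insert hxt
    have c1 : (s.erase x).card = k + 1 := by
      rw [Finset.card_erase_of_mem hxs, hs]; omega
    have c2 : (insert x t).card = k + 1 := by
      rw [Finset.card_insert_of_notMem hxt, ht]
    have := le_sumK f c1
    have := le_sumK f c2
    linarith
  have h1 : sumK f (k + 2) ≤ 2 * sumK f (k + 1) - sumK f k := by
    apply sumK_le hk
    intro s hs
    have : sumK f k ≤ 2 * sumK f (k+1) - ∑ i ∈ s, f i := by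
      apply sumK_le (by omega)
      intro t ht
      have := key s t hs ht
      linarith
    linarith
  linarith

lemma strictMono_fin_le {k : ℕ} {g : Fin k → Fin n} (hg : StrictMono g) (c : Fin k) :
    (c : ℕ) ≤ (g c : ℕ) := by
  suffices H : ∀ m (c : Fin k), (c : ℕ) = m → m ≤ (g c : ℕ) from H _ c rfl
  intro m
  induction m with
  | zero => intro c _; exact Nat.zero_le _
  | succ m ih =>
      intro c hc
      have hm : m < k := by have := c.2; omega
      have hlt : (⟨m, hm⟩ : Fin k) < c := by
        rw [Fin.lt_def]; simp; omega
      have h1 : (g ⟨m, hm⟩ : ℕ) < (g c : ℕ) := hg hlt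
      have h2 := ih ⟨m, hm⟩ rfl
      omega

lemma firstK_eq_filter {m : ℕ} (hm : m ≤ n) :
    Finset.univ.map (Fin.castLEEmb hm) = Finset.univ.filter (fun j : Fin n => (j : ℕ) < m) := by
  ext j
  simp only [Finset.mem_map, Finset.mem_univ, true_and, Finset.mem_filter, Fin.castLEEmb,
    Function.Embedding.coeFn_mk]
  constructor
  · rintro ⟨c, -, rfl⟩
    exact c.2
  · intro hj
    exact ⟨⟨(j : ℕ), hj⟩, by ext; simp⟩

lemma sum_firstK {m : ℕ} (hm : m ≤ n) (f : Fin n → ℝ) :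
    ∑ j ∈ Finset.univ.filter (fun j : Fin n => (j : ℕ) < m), f j
      = ∑ c : Fin m, f (Fin.castLE hm c) := by
  rw [← firstK_eq_filter hm, Finset.sum_map]
  rfl

lemma sumK_antitone_eq {g : Fin n → ℝ} (hg : Antitone g) {k : ℕ} (hk : k ≤ n) :
    sumK g k = ∑ c : Fin k, g (Fin.castLE hk c) := by
  apply le_antisymm
  · apply sumK_le hk
    intro s hs
    have hrange := Finset.range_orderEmbOfFin s hs
    have hmap : Finset.univ.map (s.orderEmbOfFin hs).toEmbedding = s := by
      ext j
      simp only [Finset.mem_map, Finset.mem_univ, true_and, RelEmbedding.coe_toEmbedding]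
      constructor
      · rintro ⟨c, rfl⟩
        exact Finset.orderEmbOfFin_mem s hs c
      · intro hj
        have hj' : j ∈ Set.range (s.orderEmbOfFin hs) := by
          rw [hrange]; exact Finset.mem_coe.mpr hj
        exact hj'
    have hsum : ∑ i ∈ Finset.univ.map (s.orderEmbOfFin hs).toEmbedding, g i
        = ∑ c : Fin k, g (s.orderEmbOfFin hs c) := by
      rw [Finset.sum_map]; rfl
    rw [hmap] at hsum
    calc ∑ i ∈ s, g i = ∑ c : Fin k, g (s.orderEmbOfFin hs c) := hsum
      _ ≤ ∑ c : Fin k, g (Fin.castLE hk c) := by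
          apply Finset.sum_le_sum
          intro c _
          apply hg
          rw [Fin.le_def]
          simpa using strictMono_fin_le (s.orderEmbOfFin hs).strictMono c
  · have hcard : (Finset.univ.map (Fin.castLEEmb hk)).card = k := by simp
    calc ∑ c : Fin k, g (Fin.castLE hk c)
        = ∑ j ∈ Finset.univ.map (Fin.castLEEmb hk), g j := by rw [Finset.sum_map]; rfl
      _ ≤ sumK g k := le_sumK g hcard

lemma sortDesc_antitone (f : Fin n → ℝ) : Antitone (sortDesc f) := by
  intro i j hij
  have h := Tuple.monotone_sort f (show j.rev ≤ i.rev from Fin.rev_le_rev.mpr hij)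
  simpa [sortDesc] using h

lemma sortDesc_perm (f : Fin n → ℝ) :
    sortDesc f = f ∘ (Fin.revPerm.trans (Tuple.sort f)) := by
  funext i
  simp [sortDesc, Fin.revPerm]

lemma sumK_sortDesc (f : Fin n → ℝ) {k : ℕ} (hk : k ≤ n) :
    sumK f k = ∑ c : Fin k, sortDesc f (Fin.castLE hk c) := by
  rw [← sumK_antitone_eq (sortDesc_antitone f) hk, sortDesc_perm f, sumK_perm]

lemma sortDesc_nonneg {f : Fin n → ℝ} (hf : ∀ i, 0 ≤ f i) (i : Fin n) : 0 ≤ sortDesc f i :=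
  hf _

lemma sortDesc_eq_self {f : Fin n → ℝ} (hf : Antitone f) : sortDesc f = f := by
  have hmono : Monotone (f ∘ (Fin.revPerm : Equiv.Perm (Fin n))) := by
    intro i j hij
    exact hf (Fin.rev_le_rev.mpr hij)
  have h := Tuple.comp_sort_eq_comp_iff_monotone.mpr hmono
  funext i
  have h2 := congrFun h.symm i.rev
  simp only [Function.comp_apply, Equiv.trans_apply, Fin.revPerm_apply, Fin.rev_rev] at h2
  simpa [sortDesc] using h2

lemma tlemma {σ t : Fin n → ℝ} (hσa : Antitone σ) (hσ0 : ∀ j, 0 ≤ σ j)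
    (ht0 : ∀ j, 0 ≤ t j) (ht1 : ∀ j, t j ≤ 1) {m : ℕ} (hm : m ≤ n)
    (hts : ∑ j, t j ≤ (m : ℝ)) :
    ∑ j, σ j * t j ≤ ∑ c : Fin m, σ (Fin.castLE hm c) := by
  classical
  set ρ : ℝ := if h : m < n then σ ⟨m, h⟩ else 0 with hρ
  have hρ0 : 0 ≤ ρ := by rw [hρ]; split_ifs with h; exacts [hσ0 _, le_rfl]
  have hcard : (Finset.univ.filter (fun j : Fin n => (j : ℕ) < m)).card = m := by
    rw [← firstK_eq_filter hm]; simp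
  have hρle : ∀ j : Fin n, (j : ℕ) < m → ρ ≤ σ j := by
    intro j hj
    rw [hρ]
    split_ifs with h
    · exact hσa (by rw [Fin.le_def]; simpa using hj.le)
    · exact hσ0 _
  have hleρ : ∀ j : Fin n, m ≤ (j : ℕ) → σ j ≤ ρ := by
    intro j hj
    have hmn : m < n := lt_of_le_of_lt hj j.2
    rw [hρ, dif_pos hmn]
    exact hσa (by rw [Fin.le_def]; simpa using hj)
  have key1 : ∑ j ∈ Finset.univ.filter (fun j : Fin n => (j : ℕ) < m), σ j * t j
      ≤ ∑ j ∈ Finset.univ.filter (fun j : Fin n => (j : ℕ) < m), (σ j + ρ * (t j - 1)) := by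
    apply Finset.sum_le_sum
    intro j hj
    have hjm : (j : ℕ) < m := (Finset.mem_filter.mp hj).2
    have h1 := hρle j hjm
    have h2 := ht1 j
    nlinarith [hσ0 j]
  have key2 : ∑ j ∈ Finset.univ.filter (fun j : Fin n => ¬ ((j : ℕ) < m)), σ j * t j
      ≤ ∑ j ∈ Finset.univ.filter (fun j : Fin n => ¬ ((j : ℕ) < m)), ρ * t j := by
    apply Finset.sum_le_sum
    intro j hj
    have hjm : m ≤ (j : ℕ) := by
      have := (Finset.mem_filter.mp hj).2
      omega
    exact mul_le_mul_of_nonneg_right (hleρ j hjm) (ht0 j)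
  have hsplitσt := Finset.sum_filter_add_sum_filter_not Finset.univ (fun j : Fin n => (j : ℕ) < m) (fun j => σ j * t j)
  have hsplitt := Finset.sum_filter_add_sum_filter_not Finset.univ (fun j : Fin n => (j : ℕ) < m) t
  have hsum1 : ∑ j ∈ Finset.univ.filter (fun j : Fin n => (j : ℕ) < m), (σ j + ρ * (t j - 1))
      = (∑ j ∈ Finset.univ.filter (fun j : Fin n => (j : ℕ) < m), σ j) + ρ * (∑ j ∈ Finset.univ.filter (fun j : Fin n => (j : ℕ) < m), t j) - ρ * m := by
    rw [Finset.sum_add_distrib, Finset.mul_sum]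
    have : ∑ j ∈ Finset.univ.filter (fun j : Fin n => (j : ℕ) < m), ρ * (t j - 1)
        = ∑ j ∈ Finset.univ.filter (fun j : Fin n => (j : ℕ) < m), (ρ * t j - ρ) := by
      apply Finset.sum_congr rfl; intro j _; ring
    rw [this, Finset.sum_sub_distrib, Finset.sum_const, hcard, nsmul_eq_mul]
    ring
  have hsum2 : ∑ j ∈ Finset.univ.filter (fun j : Fin n => ¬ ((j : ℕ) < m)), ρ * t j
      = ρ * ∑ j ∈ Finset.univ.filter (fun j : Fin n => ¬ ((j : ℕ) < m)), t j := by
    rw [Finset.mul_sum]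
  have htP0 : 0 ≤ ∑ j ∈ Finset.univ.filter (fun j : Fin n => (j : ℕ) < m), t j := Finset.sum_nonneg fun j _ => ht0 j
  have htP0' : 0 ≤ ∑ j ∈ Finset.univ.filter (fun j : Fin n => ¬ ((j : ℕ) < m)), t j :=
    Finset.sum_nonneg fun j _ => ht0 j
  have hfin : ∑ j ∈ Finset.univ.filter (fun j : Fin n => (j : ℕ) < m), σ j = ∑ c : Fin m, σ (Fin.castLE hm c) :=
    sum_firstK hm σ
  nlinarith [key1, key2, hsplitσt, hsplitt, hρ0, hfin]

local notation "⟪" x ", " y "⟫" => (inner ℂ x y : ℂ)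

noncomputable def mv {n : ℕ} (M : Matrix (Fin n) (Fin n) ℂ) (x : EuclideanSpace ℂ (Fin n)) :
    EuclideanSpace ℂ (Fin n) := WithLp.toLp 2 (M.mulVec x)

lemma inner_mv_left {n : ℕ} (M : Matrix (Fin n) (Fin n) ℂ) (a x : EuclideanSpace ℂ (Fin n)) :
    ⟪mv M a, x⟫ = ⟪a, mv Mᴴ x⟫ := by
  simp only [mv, PiLp.inner_apply, PiLp.toLp_apply, RCLike.inner_apply, Matrix.mulVec, dotProduct,
    Matrix.conjTranspose_apply]
  simp only [map_sum, map_mul, Finset.sum_mul, Finset.mul_sum]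
  rw [Finset.sum_comm]
  apply Finset.sum_congr rfl
  intro i _
  apply Finset.sum_congr rfl
  intro j _
  simp only [map_mul, ← starRingEnd_apply]
  ring

lemma mv_smul {n : ℕ} (M : Matrix (Fin n) (Fin n) ℂ) (c : ℂ) (x : EuclideanSpace ℂ (Fin n)) :
    mv M (c • x) = c • mv M x := by simp [mv, Matrix.mulVec_smul]

lemma mv_sum {n k : ℕ} (M : Matrix (Fin n) (Fin n) ℂ) (f : Fin k → EuclideanSpace ℂ (Fin n)) :
    mv M (∑ j, f j) = ∑ j, mv M (f j) := by
  simp [mv, Matrix.mulVec_sum, WithLp.ofLp_sum, WithLp.toLp_sum]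

lemma mv_mul {n : ℕ} (M N : Matrix (Fin n) (Fin n) ℂ) (x : EuclideanSpace ℂ (Fin n)) :
    mv (M * N) x = mv M (mv N x) := by simp [mv, ← Matrix.mulVec_mulVec]

/-- Partial singular value decomposition data for a square complex matrix. -/
structure PSVD (n : ℕ) (M : Matrix (Fin n) (Fin n) ℂ) where
  sv : Fin n → ℝ
  u : Fin n → EuclideanSpace ℂ (Fin n)
  v : Fin n → EuclideanSpace ℂ (Fin n)
  sort_eq : sv = sortDesc (singVals M)
  u_zero : ∀ j, sv j = 0 → u j = 0
  v_orth : ∀ j l, ⟪v j, v l⟫ = if j = l then 1 else 0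
  u_orth : ∀ j l, sv j ≠ 0 → sv l ≠ 0 → ⟪u j, u l⟫ = if j = l then 1 else 0
  mv_eq : ∀ x, mv M x = ∑ j, ⟪v j, x⟫ • (((sv j : ℝ) : ℂ) • u j)

namespace PSVD

variable {n : ℕ} {M : Matrix (Fin n) (Fin n) ℂ} (P : PSVD n M)

lemma sv_nonneg (j : Fin n) : 0 ≤ P.sv j := by
  rw [P.sort_eq]; exact sortDesc_nonneg (fun i => Real.sqrt_nonneg _) j

lemma anti : Antitone P.sv := by rw [P.sort_eq]; exact sortDesc_antitone _

lemma sumK_eq {k : ℕ} (hk : k ≤ n) :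
    sumK (singVals M) k = ∑ c : Fin k, P.sv (Fin.castLE hk c) := by
  rw [sumK_sortDesc (singVals M) hk]
  exact Finset.sum_congr rfl fun c _ => by rw [P.sort_eq]

lemma v_norm_sq (j : Fin n) : ‖P.v j‖ ^ 2 = 1 := by
  have h := congrArg Complex.re (P.v_orth j j)
  rw [if_pos rfl] at h
  simp only [Complex.one_re] at h
  have h2 := inner_self_eq_norm_sq (𝕜 := ℂ) (P.v j)
  simp only [RCLike.re_to_complex] at h2
  rw [← h2, h]

lemma u_norm_sq_le (j : Fin n) : ‖P.u j‖ ^ 2 ≤ 1 := by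
  by_cases h : P.sv j = 0
  · rw [P.u_zero j h]; simp
  · have hr := congrArg Complex.re (P.u_orth j j h h)
    rw [if_pos rfl] at hr
    simp only [Complex.one_re] at hr
    have h2 := inner_self_eq_norm_sq (𝕜 := ℂ) (P.u j)
    simp only [RCLike.re_to_complex] at h2
    rw [← h2, hr]

lemma v_orthonormal : Orthonormal ℂ P.v := orthonormal_iff_ite.mpr P.v_orth

lemma v_bessel (s : Finset (Fin n)) (x : EuclideanSpace ℂ (Fin n)) :
    ∑ j ∈ s, ‖⟪P.v j, x⟫‖ ^ 2 ≤ ‖x‖ ^ 2 := P.v_orthonormal.sum_inner_products_le x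

lemma u_bessel (s : Finset (Fin n)) (x : EuclideanSpace ℂ (Fin n)) :
    ∑ j ∈ s, ‖⟪P.u j, x⟫‖ ^ 2 ≤ ‖x‖ ^ 2 := by
  classical
  have hsub : Orthonormal ℂ (fun j : {j : Fin n // P.sv j ≠ 0} => P.u j) := by
    apply orthonormal_iff_ite.mpr
    rintro ⟨a, ha⟩ ⟨b, hb⟩
    rw [P.u_orth a b ha hb]
    simp [Subtype.ext_iff]
  have h1 : ∑ j ∈ s, ‖⟪P.u j, x⟫‖ ^ 2
      = ∑ j ∈ s.filter (fun j => P.sv j ≠ 0), ‖⟪P.u j, x⟫‖ ^ 2 := by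
    apply (Finset.sum_filter_of_ne ?_).symm
    intro j _ hne
    intro h0
    rw [P.u_zero j h0] at hne
    simp at hne
  have h2 : ∑ j ∈ s.subtype (fun j => P.sv j ≠ 0), ‖⟪P.u j.1, x⟫‖ ^ 2
      = ∑ j ∈ s.filter (fun j => P.sv j ≠ 0), ‖⟪P.u j, x⟫‖ ^ 2 :=
    Finset.sum_subtype_eq_sum_filter (fun j => ‖⟪P.u j, x⟫‖ ^ 2) (s := s)
  rw [h1, ← h2]
  exact hsub.sum_inner_products_le x

lemma mv_v (l : Fin n) : mv M (P.v l) = ((P.sv l : ℝ) : ℂ) • P.u l := by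
  rw [P.mv_eq (P.v l), Finset.sum_eq_single l]
  · rw [P.v_orth l l]; simp
  · intro j _ hj; rw [P.v_orth j l]; simp [hj]
  · intro h; simp at h

end PSVD

section construction

variable {n : ℕ} (M : Matrix (Fin n) (Fin n) ℂ)

private noncomputable def pperm : Equiv.Perm (Fin n) :=
  Fin.revPerm.trans (Tuple.sort (singVals M))

private noncomputable def psv : Fin n → ℝ := sortDesc (singVals M)

private noncomputable def pv (j : Fin n) : EuclideanSpace ℂ (Fin n) :=
  (Matrix.posSemidef_conjTranspose_mul_self M).1.eigenvectorBasis (pperm M j)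

private noncomputable def pu (j : Fin n) : EuclideanSpace ℂ (Fin n) :=
  if psv M j = 0 then 0 else (((psv M j)⁻¹ : ℝ) : ℂ) • mv M (pv M j)

private lemma psv_eq (j : Fin n) : psv M j = singVals M (pperm M j) := by
  simp [psv, sortDesc, pperm]

private lemma psv_sq (j : Fin n) :
    (Matrix.posSemidef_conjTranspose_mul_self M).1.eigenvalues (pperm M j) = psv M j ^ 2 := by
  have h0 := (Matrix.posSemidef_conjTranspose_mul_self M).eigenvalues_nonneg (pperm M j)
  rw [psv_eq M j]
  rw [show singVals M (pperm M j)
      = Real.sqrt ((Matrix.posSemidef_conjTranspose_mul_self M).1.eigenvalues (pperm M j))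
      from rfl]
  rw [Real.sq_sqrt h0]

private lemma pv_orth (j l : Fin n) : ⟪pv M j, pv M l⟫ = if j = l then 1 else 0 := by
  rw [pv, pv, orthonormal_iff_ite.mp
    (Matrix.posSemidef_conjTranspose_mul_self M).1.eigenvectorBasis.orthonormal]
  simp

private lemma pv_eig (j : Fin n) :
    mv (Mᴴ * M) (pv M j) = ((psv M j ^ 2 : ℝ) : ℂ) • pv M j := by
  have h := (Matrix.posSemidef_conjTranspose_mul_self M).1.mulVec_eigenvectorBasis (pperm M j)
  rw [← psv_sq M j]
  ext a
  have ha := congrFun h a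
  simpa [mv, pv, Complex.real_smul] using ha

private lemma pinner (j l : Fin n) :
    ⟪mv M (pv M j), mv M (pv M l)⟫ = ((psv M l ^ 2 : ℝ) : ℂ) * ⟪pv M j, pv M l⟫ := by
  rw [inner_mv_left, ← mv_mul, pv_eig, inner_smul_right]

private lemma pMv0 (j : Fin n) (hj : psv M j = 0) : mv M (pv M j) = 0 := by
  have h1 := pinner M j j
  rw [pv_orth M j j, if_pos rfl, mul_one, hj] at h1
  simp only [ne_eq, OfNat.ofNat_ne_zero, not_false_eq_true, zero_pow, Complex.ofReal_zero] at h1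
  exact inner_self_eq_zero.mp h1

private lemma pMv (j : Fin n) : mv M (pv M j) = ((psv M j : ℝ) : ℂ) • pu M j := by
  by_cases hj : psv M j = 0
  · rw [pMv0 M j hj, pu, if_pos hj]; simp
  · rw [pu, if_neg hj, smul_smul, ← Complex.ofReal_mul, mul_inv_cancel₀ hj]
    simp

noncomputable def psvd : PSVD n M := by
  classical
  refine ⟨psv M, pu M, pv M, rfl, fun j hj => by rw [pu, if_pos hj], pv_orth M, ?_, ?_⟩
  · intro j l hj hl
    rw [pu, pu, if_neg hj, if_neg hl, inner_smul_left, inner_smul_right, pinner M j l,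
      pv_orth M j l, Complex.conj_ofReal]
    by_cases hjl : j = l
    · subst hjl
      rw [if_pos rfl, mul_one]
      have hC : ((psv M j : ℝ) : ℂ) ≠ 0 := Complex.ofReal_ne_zero.mpr hj
      rw [Complex.ofReal_pow]
      field_simp
      simp [Complex.ofReal_inv, ← mul_pow, inv_mul_cancel₀ hC]
      exact inv_mul_cancel₀ (pow_ne_zero 2 hC)
    · rw [if_neg hjl]
      simp
  · intro x
    have hbasis : ∑ j, ⟪pv M j, x⟫ • pv M j = x := by
      have hsum := Equiv.sum_comp (pperm M)
        (fun i => ⟪(Matrix.posSemidef_conjTranspose_mul_self M).1.eigenvectorBasis i, x⟫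
          • (Matrix.posSemidef_conjTranspose_mul_self M).1.eigenvectorBasis i)
      rw [show (∑ j, ⟪pv M j, x⟫ • pv M j) = ∑ j, (fun i =>
        ⟪(Matrix.posSemidef_conjTranspose_mul_self M).1.eigenvectorBasis i, x⟫
          • (Matrix.posSemidef_conjTranspose_mul_self M).1.eigenvectorBasis i) (pperm M j)
        from rfl, hsum]
      have hrepr := (Matrix.posSemidef_conjTranspose_mul_self M).1.eigenvectorBasis.sum_repr x
      conv_rhs => rw [← hrepr]
      apply Finset.sum_congr rfl
      intro i _
      rw [OrthonormalBasis.repr_apply_apply]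
    calc mv M x = mv M (∑ j, ⟪pv M j, x⟫ • pv M j) := by rw [hbasis]
      _ = ∑ j, ⟪pv M j, x⟫ • mv M (pv M j) := by
          rw [mv_sum]
          exact Finset.sum_congr rfl fun j _ => mv_smul M _ _
      _ = ∑ j, ⟪pv M j, x⟫ • (((psv M j : ℝ) : ℂ) • pu M j) := by
          exact Finset.sum_congr rfl fun j _ => by rw [pMv M j]

end construction


/-- The family `y` satisfies the Bessel-type contraction condition. -/
def Bess {n k : ℕ} (y : Fin k → EuclideanSpace ℂ (Fin n)) : Prop :=
  ∀ x : EuclideanSpace ℂ (Fin n), ∑ c, ‖⟪y c, x⟫‖ ^ 2 ≤ ‖x‖ ^ 2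

lemma norm_inner_symm' {n : ℕ} (a b : EuclideanSpace ℂ (Fin n)) :
    ‖⟪a, b⟫‖ = ‖⟪b, a⟫‖ := by
  rw [← inner_conj_symm]
  exact RCLike.norm_conj _

lemma re_le_half_sq (w t : ℂ) : (w * t).re ≤ (‖w‖ ^ 2 + ‖t‖ ^ 2) / 2 := by
  have h1 : (w * t).re ≤ ‖w * t‖ := Complex.re_le_norm _
  rw [norm_mul] at h1
  nlinarith [norm_nonneg w, norm_nonneg t, sq_nonneg (‖w‖ - ‖t‖)]

lemma bess_norm_sum {n k : ℕ} {y : Fin k → EuclideanSpace ℂ (Fin n)} (hy : Bess y)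
    (a : Fin k → ℂ) : ‖∑ c, a c • y c‖ ^ 2 ≤ ∑ c, ‖a c‖ ^ 2 := by
  set w : EuclideanSpace ℂ (Fin n) := ∑ c, a c • y c with hw
  have hinner : ⟪w, w⟫ = ∑ c, (starRingEnd ℂ) (a c) * ⟪y c, w⟫ := by
    rw [hw]
    rw [sum_inner]
    exact Finset.sum_congr rfl fun c _ => inner_smul_left _ _ _
  have h2 : (‖w‖ : ℝ) ^ 2 = Complex.re ⟪w, w⟫ := by
    have := inner_self_eq_norm_sq (𝕜 := ℂ) w
    simp only [RCLike.re_to_complex] at this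
    rw [this]
  have h3 : Complex.re ⟪w, w⟫ ≤ (∑ c, ‖a c‖ ^ 2 + ∑ c, ‖⟪y c, w⟫‖ ^ 2) / 2 := by
    rw [hinner, Complex.re_sum]
    calc ∑ c, ((starRingEnd ℂ) (a c) * ⟪y c, w⟫).re
        ≤ ∑ c, (‖(starRingEnd ℂ) (a c)‖ ^ 2 + ‖⟪y c, w⟫‖ ^ 2) / 2 :=
          Finset.sum_le_sum fun c _ => re_le_half_sq _ _
      _ = (∑ c, ‖a c‖ ^ 2 + ∑ c, ‖⟪y c, w⟫‖ ^ 2) / 2 := by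
          rw [← Finset.sum_add_distrib, ← Finset.sum_div]
          congr 1
          exact Finset.sum_congr rfl fun c _ => by rw [RCLike.norm_conj]
  have h4 := hy w
  linarith

lemma master {n : ℕ} {M : Matrix (Fin n) (Fin n) ℂ} (P : PSVD n M) {k m : ℕ} (hm : m ≤ n)
    (y z : Fin k → EuclideanSpace ℂ (Fin n)) (hy1 : Bess y) (hz1 : Bess z)
    (hy2 : ∑ c, ‖y c‖ ^ 2 ≤ (m : ℝ)) (hz2 : ∑ c, ‖z c‖ ^ 2 ≤ (m : ℝ)) :
    ∑ c, (⟪z c, mv M (y c)⟫).re ≤ sumK (singVals M) m := by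
  classical
  set a : Fin n → ℝ := fun j => ∑ c, ‖⟪P.v j, y c⟫‖ ^ 2 with ha
  set b : Fin n → ℝ := fun j => ∑ c, ‖⟪P.u j, z c⟫‖ ^ 2 with hb
  set t : Fin n → ℝ := fun j => (a j + b j) / 2 with htdef
  have hterm : ∀ c, ⟪z c, mv M (y c)⟫
      = ∑ j, ((P.sv j : ℝ) : ℂ) * (⟪P.v j, y c⟫ * ⟪z c, P.u j⟫) := by
    intro c
    rw [P.mv_eq (y c), inner_sum]
    apply Finset.sum_congr rfl
    intro j _
    rw [inner_smul_right, inner_smul_right]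
    ring
  have hswap : ∑ c, (⟪z c, mv M (y c)⟫).re
      = ∑ j, P.sv j * (∑ c, (⟪P.v j, y c⟫ * ⟪z c, P.u j⟫).re) := by
    calc ∑ c, (⟪z c, mv M (y c)⟫).re
        = ∑ c, ∑ j, (((P.sv j : ℝ) : ℂ) * (⟪P.v j, y c⟫ * ⟪z c, P.u j⟫)).re := by
          apply Finset.sum_congr rfl
          intro c _
          rw [hterm c, Complex.re_sum]
      _ = ∑ j, ∑ c, (((P.sv j : ℝ) : ℂ) * (⟪P.v j, y c⟫ * ⟪z c, P.u j⟫)).re :=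
          Finset.sum_comm
      _ = ∑ j, P.sv j * (∑ c, (⟪P.v j, y c⟫ * ⟪z c, P.u j⟫).re) := by
          apply Finset.sum_congr rfl
          intro j _
          rw [Finset.mul_sum]
          exact Finset.sum_congr rfl fun c _ => Complex.re_ofReal_mul _ _
  have hdt : ∀ j, ∑ c, (⟪P.v j, y c⟫ * ⟪z c, P.u j⟫).re ≤ t j := by
    intro j
    calc ∑ c, (⟪P.v j, y c⟫ * ⟪z c, P.u j⟫).re
        ≤ ∑ c, (‖⟪P.v j, y c⟫‖ ^ 2 + ‖⟪z c, P.u j⟫‖ ^ 2) / 2 :=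
          Finset.sum_le_sum fun c _ => re_le_half_sq _ _
      _ = ((∑ c, ‖⟪P.v j, y c⟫‖ ^ 2) + ∑ c, ‖⟪z c, P.u j⟫‖ ^ 2) / 2 := by
          rw [← Finset.sum_div, Finset.sum_add_distrib]
      _ = t j := by
          rw [htdef, ha, hb]
          simp only
          congr 2
          exact Finset.sum_congr rfl fun c _ => by rw [norm_inner_symm']
  have ht0 : ∀ j, 0 ≤ t j := by
    intro j
    rw [htdef]
    simp only
    have ha0 : 0 ≤ a j := Finset.sum_nonneg fun c _ => sq_nonneg _
    have hb0 : 0 ≤ b j := Finset.sum_nonneg fun c _ => sq_nonneg _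
    linarith
  have ht1 : ∀ j, t j ≤ 1 := by
    intro j
    have haj : a j ≤ 1 := by
      rw [ha]
      simp only
      calc ∑ c, ‖⟪P.v j, y c⟫‖ ^ 2 = ∑ c, ‖⟪y c, P.v j⟫‖ ^ 2 :=
            Finset.sum_congr rfl fun c _ => by rw [norm_inner_symm']
        _ ≤ ‖P.v j‖ ^ 2 := hy1 (P.v j)
        _ = 1 := P.v_norm_sq j
    have hbj : b j ≤ 1 := by
      rw [hb]
      simp only
      calc ∑ c, ‖⟪P.u j, z c⟫‖ ^ 2 = ∑ c, ‖⟪z c, P.u j⟫‖ ^ 2 :=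
            Finset.sum_congr rfl fun c _ => by rw [norm_inner_symm']
        _ ≤ ‖P.u j‖ ^ 2 := hz1 (P.u j)
        _ ≤ 1 := P.u_norm_sq_le j
    rw [htdef]
    simp only
    linarith
  have hts : ∑ j, t j ≤ (m : ℝ) := by
    have hsa : ∑ j, a j ≤ (m : ℝ) := by
      calc ∑ j, a j = ∑ c, ∑ j, ‖⟪P.v j, y c⟫‖ ^ 2 := Finset.sum_comm
        _ ≤ ∑ c, ‖y c‖ ^ 2 := Finset.sum_le_sum fun c _ => P.v_bessel Finset.univ (y c)
        _ ≤ (m : ℝ) := hy2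
    have hsb : ∑ j, b j ≤ (m : ℝ) := by
      calc ∑ j, b j = ∑ c, ∑ j, ‖⟪P.u j, z c⟫‖ ^ 2 := Finset.sum_comm
        _ ≤ ∑ c, ‖z c‖ ^ 2 := Finset.sum_le_sum fun c _ => P.u_bessel Finset.univ (z c)
        _ ≤ (m : ℝ) := hz2
    calc ∑ j, t j = ((∑ j, a j) + ∑ j, b j) / 2 := by
          rw [htdef, ← Finset.sum_div, Finset.sum_add_distrib]
      _ ≤ (m : ℝ) := by linarith
  rw [hswap, P.sumK_eq hm]
  calc ∑ j, P.sv j * (∑ c, (⟪P.v j, y c⟫ * ⟪z c, P.u j⟫).re)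
      ≤ ∑ j, P.sv j * t j :=
        Finset.sum_le_sum fun j _ => mul_le_mul_of_nonneg_left (hdt j) (P.sv_nonneg j)
    _ ≤ ∑ c : Fin m, P.sv (Fin.castLE hm c) :=
        tlemma P.anti P.sv_nonneg ht0 ht1 hm hts

lemma sum_firstK' {n : ℕ} {β : Type*} [AddCommMonoid β] {m : ℕ} (hm : m ≤ n) (f : Fin n → β) :
    ∑ j ∈ Finset.univ.filter (fun j : Fin n => (j : ℕ) < m), f j
      = ∑ c : Fin m, f (Fin.castLE hm c) := by
  rw [← firstK_eq_filter hm, Finset.sum_map]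
  rfl

lemma mv_sub {n : ℕ} (M N : Matrix (Fin n) (Fin n) ℂ) (x : EuclideanSpace ℂ (Fin n)) :
    mv (M - N) x = mv M x - mv N x := by simp [mv, Matrix.sub_mulVec]

lemma mv_smulOne {n : ℕ} (α : ℂ) (x : EuclideanSpace ℂ (Fin n)) :
    mv (α • (1 : Matrix (Fin n) (Fin n) ℂ)) x = α • x := by
  simp [mv, Matrix.smul_mulVec, Matrix.one_mulVec]

lemma mv_sum' {n : ℕ} {ι : Type*} (s : Finset ι) (M : Matrix (Fin n) (Fin n) ℂ)
    (f : ι → EuclideanSpace ℂ (Fin n)) :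
    mv M (∑ j ∈ s, f j) = ∑ j ∈ s, mv M (f j) := by
  simp [mv, Matrix.mulVec_sum, WithLp.ofLp_sum, WithLp.toLp_sum]

lemma bess_sum_subset {n : ℕ} {y : Fin n → EuclideanSpace ℂ (Fin n)} (hy : Bess y)
    (s : Finset (Fin n)) (c : Fin n → ℂ) :
    ‖∑ j ∈ s, c j • y j‖ ^ 2 ≤ ∑ j ∈ s, ‖c j‖ ^ 2 := by
  classical
  have h := bess_norm_sum hy (fun j => if j ∈ s then c j else 0)
  have h1 : ∑ j : Fin n, (if j ∈ s then c j else 0) • y j = ∑ j ∈ s, c j • y j := by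
    have e : ∀ j : Fin n, (if j ∈ s then c j else 0) • y j
        = if j ∈ s then c j • y j else 0 := by
      intro j; by_cases hj : j ∈ s <;> simp [hj]
    rw [Finset.sum_congr rfl (fun j _ => e j), Finset.sum_ite_mem, Finset.univ_inter]
  have h2 : ∑ j : Fin n, ‖if j ∈ s then c j else 0‖ ^ 2 = ∑ j ∈ s, ‖c j‖ ^ 2 := by
    have e : ∀ j : Fin n, ‖if j ∈ s then c j else 0‖ ^ 2
        = if j ∈ s then ‖c j‖ ^ 2 else 0 := by
      intro j; by_cases hj : j ∈ s <;> simp [hj]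
    rw [Finset.sum_congr rfl (fun j _ => e j), Finset.sum_ite_mem, Finset.univ_inter]
  rw [h1, h2] at h
  exact h

lemma bess_neg {n k : ℕ} {y : Fin k → EuclideanSpace ℂ (Fin n)} (hy : Bess y) :
    Bess (fun c => -(y c)) := by
  intro x
  have e : ∀ c, ‖⟪-(y c), x⟫‖ = ‖⟪y c, x⟫‖ := by
    intro c
    rw [inner_neg_left, norm_neg]
  calc ∑ c, ‖⟪-(y c), x⟫‖ ^ 2 = ∑ c, ‖⟪y c, x⟫‖ ^ 2 :=
        Finset.sum_congr rfl fun c _ => by rw [e c]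
    _ ≤ ‖x‖ ^ 2 := hy x

lemma card_filter_lt_le {n : ℕ} (r : ℕ) :
    (Finset.univ.filter (fun j : Fin n => (j : ℕ) < r)).card ≤ r := by
  calc (Finset.univ.filter (fun j : Fin n => (j : ℕ) < r)).card
      ≤ (Finset.range r).card := Finset.card_le_card_of_injOn (fun j : Fin n => (j : ℕ))
        (fun j hj => Finset.mem_range.mpr (by simpa using (Finset.mem_filter.mp hj).2))
        Fin.val_injective.injOn
    _ = r := Finset.card_range r

namespace PSVD

variable {n : ℕ} {M : Matrix (Fin n) (Fin n) ℂ} (P : PSVD n M)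

/-- Truncated partial isometry sending `v j ↦ u j` for `j < r`. -/
noncomputable def pmap (r : ℕ) (x : EuclideanSpace ℂ (Fin n)) : EuclideanSpace ℂ (Fin n) :=
  ∑ j ∈ Finset.univ.filter (fun j : Fin n => (j : ℕ) < r), ⟪P.v j, x⟫ • P.u j

/-- Adjoint of `pmap`. -/
noncomputable def qmap (r : ℕ) (x : EuclideanSpace ℂ (Fin n)) : EuclideanSpace ℂ (Fin n) :=
  ∑ j ∈ Finset.univ.filter (fun j : Fin n => (j : ℕ) < r), ⟪P.u j, x⟫ • P.v j

lemma pmap_adj (r : ℕ) (y x : EuclideanSpace ℂ (Fin n)) :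
    ⟪P.pmap r y, x⟫ = ⟪y, P.qmap r x⟫ := by
  rw [pmap, qmap, sum_inner, inner_sum]
  apply Finset.sum_congr rfl
  intro j _
  rw [inner_smul_left, inner_smul_right, inner_conj_symm]
  ring

lemma qmap_adj (r : ℕ) (y x : EuclideanSpace ℂ (Fin n)) :
    ⟪P.qmap r y, x⟫ = ⟪y, P.pmap r x⟫ := by
  have h := P.pmap_adj r x y
  calc ⟪P.qmap r y, x⟫ = (starRingEnd ℂ) ⟪x, P.qmap r y⟫ := by rw [inner_conj_symm]
    _ = (starRingEnd ℂ) ⟪P.pmap r x, y⟫ := by rw [h]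
    _ = ⟪y, P.pmap r x⟫ := by rw [inner_conj_symm]

lemma u_besselFam : Bess (fun j : Fin n => P.u j) := fun x => P.u_bessel Finset.univ x

lemma v_besselFam : Bess (fun j : Fin n => P.v j) := fun x => P.v_bessel Finset.univ x

lemma pmap_norm_sq_le' (r : ℕ) (x : EuclideanSpace ℂ (Fin n)) :
    ‖P.pmap r x‖ ^ 2 ≤ ∑ j ∈ Finset.univ.filter (fun j : Fin n => (j : ℕ) < r),
      ‖⟪P.v j, x⟫‖ ^ 2 :=
  bess_sum_subset P.u_besselFam _ _

lemma pmap_norm_le (r : ℕ) (x : EuclideanSpace ℂ (Fin n)) : ‖P.pmap r x‖ ^ 2 ≤ ‖x‖ ^ 2 :=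
  le_trans (P.pmap_norm_sq_le' r x) (P.v_bessel _ x)

lemma qmap_norm_sq_le' (r : ℕ) (x : EuclideanSpace ℂ (Fin n)) :
    ‖P.qmap r x‖ ^ 2 ≤ ∑ j ∈ Finset.univ.filter (fun j : Fin n => (j : ℕ) < r),
      ‖⟪P.u j, x⟫‖ ^ 2 :=
  bess_sum_subset P.v_besselFam _ _

lemma qmap_norm_le (r : ℕ) (x : EuclideanSpace ℂ (Fin n)) : ‖P.qmap r x‖ ^ 2 ≤ ‖x‖ ^ 2 :=
  le_trans (P.qmap_norm_sq_le' r x) (P.u_bessel _ x)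

lemma bess_pmap {k : ℕ} {y : Fin k → EuclideanSpace ℂ (Fin n)} (hy : Bess y) (r : ℕ) :
    Bess (fun c => P.pmap r (y c)) := by
  intro x
  calc ∑ c, ‖⟪P.pmap r (y c), x⟫‖ ^ 2 = ∑ c, ‖⟪y c, P.qmap r x⟫‖ ^ 2 :=
        Finset.sum_congr rfl fun c _ => by rw [P.pmap_adj]
    _ ≤ ‖P.qmap r x‖ ^ 2 := hy _
    _ ≤ ‖x‖ ^ 2 := P.qmap_norm_le r x

lemma bess_qmap {k : ℕ} {y : Fin k → EuclideanSpace ℂ (Fin n)} (hy : Bess y) (r : ℕ) :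
    Bess (fun c => P.qmap r (y c)) := by
  intro x
  calc ∑ c, ‖⟪P.qmap r (y c), x⟫‖ ^ 2 = ∑ c, ‖⟪y c, P.pmap r x⟫‖ ^ 2 :=
        Finset.sum_congr rfl fun c _ => by rw [P.qmap_adj]
    _ ≤ ‖P.pmap r x‖ ^ 2 := hy _
    _ ≤ ‖x‖ ^ 2 := P.pmap_norm_le r x

lemma pmap_sub (r : ℕ) (x y : EuclideanSpace ℂ (Fin n)) :
    P.pmap r (x - y) = P.pmap r x - P.pmap r y := by
  rw [pmap, pmap, pmap, ← Finset.sum_sub_distrib]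
  apply Finset.sum_congr rfl
  intro j _
  rw [inner_sub_right, sub_smul]

lemma pmap_smulC (r : ℕ) (a : ℂ) (x : EuclideanSpace ℂ (Fin n)) :
    P.pmap r (a • x) = a • P.pmap r x := by
  rw [pmap, pmap, Finset.smul_sum]
  apply Finset.sum_congr rfl
  intro j _
  rw [inner_smul_right, mul_smul]

lemma sum_pmap_norm_le_r {k : ℕ} {y : Fin k → EuclideanSpace ℂ (Fin n)} (hy : Bess y) (r : ℕ) :
    ∑ c, ‖P.pmap r (y c)‖ ^ 2 ≤ (r : ℝ) := by
  calc ∑ c, ‖P.pmap r (y c)‖ ^ 2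
      ≤ ∑ c, ∑ j ∈ Finset.univ.filter (fun j : Fin n => (j : ℕ) < r), ‖⟪P.v j, y c⟫‖ ^ 2 :=
        Finset.sum_le_sum fun c _ => P.pmap_norm_sq_le' r (y c)
    _ = ∑ j ∈ Finset.univ.filter (fun j : Fin n => (j : ℕ) < r), ∑ c, ‖⟪P.v j, y c⟫‖ ^ 2 :=
        Finset.sum_comm
    _ ≤ ∑ j ∈ Finset.univ.filter (fun j : Fin n => (j : ℕ) < r), (1 : ℝ) := by
        apply Finset.sum_le_sum
        intro j _
        calc ∑ c, ‖⟪P.v j, y c⟫‖ ^ 2 = ∑ c, ‖⟪y c, P.v j⟫‖ ^ 2 :=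
              Finset.sum_congr rfl fun c _ => by rw [norm_inner_symm']
          _ ≤ ‖P.v j‖ ^ 2 := hy _
          _ = 1 := P.v_norm_sq j
    _ ≤ (r : ℝ) := by
        rw [Finset.sum_const, nsmul_eq_mul, mul_one]
        exact_mod_cast card_filter_lt_le r
  
lemma sum_qmap_norm_le_r {k : ℕ} {z : Fin k → EuclideanSpace ℂ (Fin n)} (hz : Bess z) (r : ℕ) :
    ∑ c, ‖P.qmap r (z c)‖ ^ 2 ≤ (r : ℝ) := by
  calc ∑ c, ‖P.qmap r (z c)‖ ^ 2
      ≤ ∑ c, ∑ j ∈ Finset.univ.filter (fun j : Fin n => (j : ℕ) < r), ‖⟪P.u j, z c⟫‖ ^ 2 :=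
        Finset.sum_le_sum fun c _ => P.qmap_norm_sq_le' r (z c)
    _ = ∑ j ∈ Finset.univ.filter (fun j : Fin n => (j : ℕ) < r), ∑ c, ‖⟪P.u j, z c⟫‖ ^ 2 :=
        Finset.sum_comm
    _ ≤ ∑ j ∈ Finset.univ.filter (fun j : Fin n => (j : ℕ) < r), (1 : ℝ) := by
        apply Finset.sum_le_sum
        intro j _
        calc ∑ c, ‖⟪P.u j, z c⟫‖ ^ 2 = ∑ c, ‖⟪z c, P.u j⟫‖ ^ 2 :=
              Finset.sum_congr rfl fun c _ => by rw [norm_inner_symm']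
          _ ≤ ‖P.u j‖ ^ 2 := hz _
          _ ≤ 1 := P.u_norm_sq_le j
    _ ≤ (r : ℝ) := by
        rw [Finset.sum_const, nsmul_eq_mul, mul_one]
        exact_mod_cast card_filter_lt_le r

lemma sum_pmap_norm_le {k : ℕ} (y : Fin k → EuclideanSpace ℂ (Fin n)) (r : ℕ) :
    ∑ c, ‖P.pmap r (y c)‖ ^ 2 ≤ ∑ c, ‖y c‖ ^ 2 :=
  Finset.sum_le_sum fun c _ => P.pmap_norm_le r (y c)

lemma sum_qmap_norm_le {k : ℕ} (z : Fin k → EuclideanSpace ℂ (Fin n)) (r : ℕ) :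
    ∑ c, ‖P.qmap r (z c)‖ ^ 2 ≤ ∑ c, ‖z c‖ ^ 2 :=
  Finset.sum_le_sum fun c _ => P.qmap_norm_le r (z c)

end PSVD

lemma singVals_nonneg {n : ℕ} (A : Matrix (Fin n) (Fin n) ℂ) : ∀ i, 0 ≤ singVals A i :=
  fun _ => Real.sqrt_nonneg _

lemma kyFan_nonneg {n : ℕ} (A : Matrix (Fin n) (Fin n) ℂ) (k : ℕ) : 0 ≤ kyFan A k :=
  sumK_nonneg (singVals_nonneg A) k

section disc

variable {n : ℕ} (A B : Matrix (Fin n) (Fin n) ℂ)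

lemma discSet_nonempty (k : ℕ) :
    {x | ∃ α : ℂ, x = (kyFan (A - α • 1) k + kyFan (B - α • 1) k) / 2}.Nonempty :=
  ⟨_, 0, rfl⟩

lemma discSet_bddBelow (k : ℕ) :
    BddBelow {x | ∃ α : ℂ, x = (kyFan (A - α • 1) k + kyFan (B - α • 1) k) / 2} := by
  refine ⟨0, ?_⟩
  rintro x ⟨α, rfl⟩
  have h1 := kyFan_nonneg (A - α • 1) k
  have h2 := kyFan_nonneg (B - α • 1) k
  linarith

lemma discNorm2_le (k : ℕ) (α : ℂ) :
    discNorm2 A B k ≤ (kyFan (A - α • 1) k + kyFan (B - α • 1) k) / 2 :=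
  csInf_le (discSet_bddBelow A B k) ⟨α, rfl⟩

lemma le_discNorm2 {c : ℝ} (k : ℕ)
    (h : ∀ α : ℂ, c ≤ (kyFan (A - α • 1) k + kyFan (B - α • 1) k) / 2) :
    c ≤ discNorm2 A B k :=
  le_csInf (discSet_nonempty A B k) (by rintro x ⟨α, rfl⟩; exact h α)

lemma discNorm2_nonneg (k : ℕ) : 0 ≤ discNorm2 A B k :=
  le_discNorm2 A B k fun α => by
    have h1 := kyFan_nonneg (A - α • 1) k
    have h2 := kyFan_nonneg (B - α • 1) k
    linarith

lemma discNorm2_zero : discNorm2 A B 0 = 0 := by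
  apply le_antisymm
  · have h := discNorm2_le A B 0 0
    have h1 : kyFan (A - (0 : ℂ) • 1) 0 = 0 := sumK_zero _
    have h2 : kyFan (B - (0 : ℂ) • 1) 0 = 0 := sumK_zero _
    rw [h1, h2] at h
    simpa using h
  · exact discNorm2_nonneg A B 0

lemma discNorm2_mono {i j : ℕ} (hij : i ≤ j) (hj : j ≤ n) :
    discNorm2 A B i ≤ discNorm2 A B j := by
  apply le_discNorm2
  intro α
  have h1 := discNorm2_le A B i α
  have h2 : kyFan (A - α • 1) i ≤ kyFan (A - α • 1) j :=
    sumK_mono (singVals_nonneg _) hij hj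
  have h3 : kyFan (B - α • 1) i ≤ kyFan (B - α • 1) j :=
    sumK_mono (singVals_nonneg _) hij hj
  linarith

lemma discNorm2_concave {j : ℕ} (hj : j + 2 ≤ n) :
    discNorm2 A B (j + 2) + discNorm2 A B j ≤ 2 * discNorm2 A B (j + 1) := by
  have h : (discNorm2 A B (j + 2) + discNorm2 A B j) / 2 ≤ discNorm2 A B (j + 1) := by
    apply le_discNorm2
    intro α
    have h2 := discNorm2_le A B (j + 2) α
    have h0 := discNorm2_le A B j α
    have hA := sumK_concave (singVals (A - α • 1)) hj
    have hB := sumK_concave (singVals (B - α • 1)) hj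
    show _ ≤ (kyFan (A - α • 1) (j + 1) + kyFan (B - α • 1) (j + 1)) / 2
    unfold kyFan at *
    linarith
  linarith

lemma discVals2_nonneg (i : Fin n) : 0 ≤ discVals2 A B i := by
  have h := discNorm2_mono A B (Nat.le_succ i.1) (show i.1 + 1 ≤ n from i.2)
  show 0 ≤ discNorm2 A B (i.1 + 1) - discNorm2 A B i.1
  linarith

lemma discVals2_anti : Antitone (discVals2 A B) := by
  have aux : ∀ d a : ℕ, a + d + 1 ≤ n →
      discNorm2 A B (a + d + 1) - discNorm2 A B (a + d)
        ≤ discNorm2 A B (a + 1) - discNorm2 A B a := by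
    intro d
    induction d with
    | zero => intro a _; simp
    | succ d ih =>
        intro a h
        have hc := discNorm2_concave A B (j := a + d) (by omega)
        have hi := ih a (by omega)
        rw [show a + (d + 1) + 1 = a + d + 2 from by omega,
          show a + (d + 1) = a + d + 1 from by omega]
        linarith
  intro i j hij
  have hj1 : j.1 + 1 ≤ n := j.2
  have h := aux (j.1 - i.1) i.1 (by omega)
  rw [show i.1 + (j.1 - i.1) = j.1 from by omega] at h
  exact h

end disc

lemma abel_id (D σ' : ℕ → ℝ) (n k : ℕ) (hk : k ≤ n) (hD0 : D 0 = 0) (hσ : σ' n = 0) :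
    ∑ m ∈ Finset.range n, (σ' m - σ' (m + 1)) * (2 * D (min (m + 1) k))
      = ∑ i ∈ Finset.range k, (2 * (D (i + 1) - D i)) * σ' i := by
  have hshift : ∑ m ∈ Finset.range n, σ' (m + 1) * (2 * D (min (m + 1) k))
      = ∑ m ∈ Finset.range n, σ' m * (2 * D (min m k)) := by
    have h1 := Finset.sum_range_succ' (fun m => σ' m * (2 * D (min m k))) n
    have h2 := Finset.sum_range_succ (fun m => σ' m * (2 * D (min m k))) n
    have h0 : σ' 0 * (2 * D (min 0 k)) = 0 := by simp [hD0]
    have hn : σ' n * (2 * D (min n k)) = 0 := by rw [hσ]; ring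
    rw [h0] at h1
    rw [hn] at h2
    simp only [add_zero] at h1 h2
    rw [← h1, h2]
  calc ∑ m ∈ Finset.range n, (σ' m - σ' (m + 1)) * (2 * D (min (m + 1) k))
      = ∑ m ∈ Finset.range n, (σ' m * (2 * D (min (m + 1) k))
          - σ' (m + 1) * (2 * D (min (m + 1) k))) := by
        exact Finset.sum_congr rfl fun m _ => by ring
    _ = ∑ m ∈ Finset.range n, σ' m * (2 * D (min (m + 1) k))
          - ∑ m ∈ Finset.range n, σ' (m + 1) * (2 * D (min (m + 1) k)) :=
        Finset.sum_sub_distrib _ _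
    _ = ∑ m ∈ Finset.range n, σ' m * (2 * D (min (m + 1) k))
          - ∑ m ∈ Finset.range n, σ' m * (2 * D (min m k)) := by rw [hshift]
    _ = ∑ m ∈ Finset.range n, (σ' m * (2 * D (min (m + 1) k)) - σ' m * (2 * D (min m k))) :=
        (Finset.sum_sub_distrib _ _).symm
    _ = ∑ m ∈ Finset.range n, (if m < k then (2 * (D (m + 1) - D m)) * σ' m else 0) := by
        apply Finset.sum_congr rfl
        intro m _
        by_cases hmk : m < k
        · rw [if_pos hmk, min_eq_left (by omega), min_eq_left (by omega)]
          ring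
        · rw [if_neg hmk, min_eq_right (by omega), min_eq_right (by omega)]
          ring
    _ = ∑ i ∈ Finset.range k, (if i < k then (2 * (D (i + 1) - D i)) * σ' i else 0) :=
        (Finset.sum_subset (Finset.range_subset_range.mpr hk)
          (fun x _ hx => by rw [if_neg (by simpa [Finset.mem_range] using hx)])).symm
    _ = ∑ i ∈ Finset.range k, (2 * (D (i + 1) - D i)) * σ' i :=
        Finset.sum_congr rfl fun i hi => by
          rw [if_pos (Finset.mem_range.mp hi)]

namespace PSVD

variable {n : ℕ} {M : Matrix (Fin n) (Fin n) ℂ} (P : PSVD n M)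

/-- `sv` extended to `ℕ` by zero. -/
noncomputable def sig (m : ℕ) : ℝ := if h : m < n then P.sv ⟨m, h⟩ else 0

lemma sig_nonneg (m : ℕ) : 0 ≤ P.sig m := by
  rw [sig]; split_ifs; exacts [P.sv_nonneg _, le_rfl]

lemma sig_top {m : ℕ} (hm : n ≤ m) : P.sig m = 0 := by
  rw [sig, dif_neg (by omega)]

lemma sig_fin (j : Fin n) : P.sig j.1 = P.sv j := by
  rw [sig, dif_pos j.2]

lemma sig_anti {a b : ℕ} (hab : a ≤ b) : P.sig b ≤ P.sig a := by
  rw [sig, sig]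
  split_ifs with h1 h2
  · exact P.anti (by rw [Fin.le_def]; simpa using hab)
  · exact absurd h1 (by omega)
  · exact P.sv_nonneg _
  · exact le_rfl

lemma sig_step_nonneg (m : ℕ) : 0 ≤ P.sig m - P.sig (m + 1) := by
  have := P.sig_anti (Nat.le_succ m)
  linarith

lemma coef_telescope (j : Fin n) :
    ∑ m ∈ Finset.range n, (if (j : ℕ) < m + 1 then P.sig m - P.sig (m + 1) else 0)
      = P.sv j := by
  have h1 : ∑ m ∈ Finset.range n, (if (j : ℕ) < m + 1 then P.sig m - P.sig (m + 1) else 0)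
      = ∑ m ∈ (Finset.range n).filter (fun m => (j : ℕ) < m + 1),
          (P.sig m - P.sig (m + 1)) := (Finset.sum_filter _ _).symm
  have h2 : (Finset.range n).filter (fun m => (j : ℕ) < m + 1) = Finset.Ico (j : ℕ) n := by
    ext m
    simp only [Finset.mem_filter, Finset.mem_range, Finset.mem_Ico]
    omega
  have h3 : ∑ m ∈ Finset.Ico (j : ℕ) n, (P.sig m - P.sig (m + 1))
      = ∑ r ∈ Finset.range (n - (j : ℕ)),
          (P.sig ((j : ℕ) + r) - P.sig ((j : ℕ) + r + 1)) := by
    rw [Finset.sum_Ico_eq_sum_range]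
  have h4 : ∑ r ∈ Finset.range (n - (j : ℕ)),
        (P.sig ((j : ℕ) + r) - P.sig ((j : ℕ) + r + 1))
      = ∑ r ∈ Finset.range (n - (j : ℕ)),
        ((fun r => P.sig ((j : ℕ) + r)) r - (fun r => P.sig ((j : ℕ) + r)) (r + 1)) := by
    apply Finset.sum_congr rfl
    intro r _
    simp only
    rw [show (j : ℕ) + (r + 1) = (j : ℕ) + r + 1 from by omega]
  rw [h1, h2, h3, h4, Finset.sum_range_sub' (fun r => P.sig ((j : ℕ) + r))]
  rw [show (j : ℕ) + (n - (j : ℕ)) = n from by omega, P.sig_top le_rfl, sub_zero]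
  rw [show (j : ℕ) + 0 = (j : ℕ) from by omega, P.sig_fin j]

lemma mv_decomp (w : EuclideanSpace ℂ (Fin n)) :
    mv M w = ∑ m ∈ Finset.range n,
      ((P.sig m - P.sig (m + 1) : ℝ) : ℂ) • P.pmap (m + 1) w := by
  have step1 : ∀ m, P.pmap (m + 1) w
      = ∑ j : Fin n, (if (j : ℕ) < m + 1 then ⟪P.v j, w⟫ • P.u j else 0) := by
    intro m
    rw [pmap, Finset.sum_filter]
  calc mv M w = ∑ j, ⟪P.v j, w⟫ • (((P.sv j : ℝ) : ℂ) • P.u j) := P.mv_eq w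
    _ = ∑ j : Fin n, ((P.sv j : ℝ) : ℂ) • (⟪P.v j, w⟫ • P.u j) := by
        exact Finset.sum_congr rfl fun j _ => smul_comm _ _ _
    _ = ∑ j : Fin n, ((∑ m ∈ Finset.range n,
          (if (j : ℕ) < m + 1 then P.sig m - P.sig (m + 1) else 0) : ℝ) : ℂ)
          • (⟪P.v j, w⟫ • P.u j) := by
        exact Finset.sum_congr rfl fun j _ => by rw [P.coef_telescope j]
    _ = ∑ j : Fin n, ∑ m ∈ Finset.range n,
          (if (j : ℕ) < m + 1 then ((P.sig m - P.sig (m + 1) : ℝ) : ℂ) else 0)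
          • (⟪P.v j, w⟫ • P.u j) := by
        apply Finset.sum_congr rfl
        intro j _
        rw [← Finset.sum_smul]
        congr 1
        rw [Complex.ofReal_sum]
        apply Finset.sum_congr rfl
        intro m _
        by_cases hc : (j : ℕ) < m + 1 <;> simp [hc]
    _ = ∑ m ∈ Finset.range n, ∑ j : Fin n,
          (if (j : ℕ) < m + 1 then ((P.sig m - P.sig (m + 1) : ℝ) : ℂ) else 0)
          • (⟪P.v j, w⟫ • P.u j) := Finset.sum_comm
    _ = ∑ m ∈ Finset.range n,
          ((P.sig m - P.sig (m + 1) : ℝ) : ℂ) • P.pmap (m + 1) w := by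
        apply Finset.sum_congr rfl
        intro m _
        rw [step1 m, Finset.smul_sum]
        apply Finset.sum_congr rfl
        intro j _
        by_cases hc : (j : ℕ) < m + 1 <;> simp [hc]

end PSVD

section bounds

variable {n : ℕ} {X : Matrix (Fin n) (Fin n) ℂ} (PX : PSVD n X)
variable {k : ℕ} {y₀ z₀ : Fin k → EuclideanSpace ℂ (Fin n)}

lemma boundA (hk : k ≤ n) (hy₀ : Bess y₀) (hz₀ : Bess z₀)
    (hy₀n : ∀ c, ‖y₀ c‖ ^ 2 ≤ 1) (hz₀n : ∀ c, ‖z₀ c‖ ^ 2 ≤ 1)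
    (m : ℕ) (hm : m + 1 ≤ n) (A' : Matrix (Fin n) (Fin n) ℂ) :
    ∑ c, (⟪z₀ c, mv A' (PX.pmap (m + 1) (y₀ c))⟫).re
      ≤ sumK (singVals A') (min (m + 1) k) := by
  rcases le_or_gt k (m + 1) with hcase | hcase
  · rw [min_eq_right hcase]
    refine master (psvd A') hk (fun c => PX.pmap (m + 1) (y₀ c)) z₀
      (PX.bess_pmap hy₀ (m + 1)) hz₀ ?_ ?_
    · calc ∑ c, ‖PX.pmap (m + 1) (y₀ c)‖ ^ 2 ≤ ∑ c, ‖y₀ c‖ ^ 2 :=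
            PX.sum_pmap_norm_le y₀ (m + 1)
        _ ≤ ∑ _c : Fin k, (1 : ℝ) := Finset.sum_le_sum fun c _ => hy₀n c
        _ = (k : ℝ) := by simp
    · calc ∑ c, ‖z₀ c‖ ^ 2 ≤ ∑ _c : Fin k, (1 : ℝ) := Finset.sum_le_sum fun c _ => hz₀n c
        _ = (k : ℝ) := by simp
  · rw [min_eq_left (by omega)]
    set vA : Fin (m + 1) → EuclideanSpace ℂ (Fin n) := fun d => PX.v (Fin.castLE hm d) with hvA
    set uA : Fin (m + 1) → EuclideanSpace ℂ (Fin n) := fun d => PX.u (Fin.castLE hm d) with huA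
    set zA : Fin (m + 1) → EuclideanSpace ℂ (Fin n) :=
      fun d => ∑ c, ⟪y₀ c, vA d⟫ • z₀ c with hzA
    have hpm : ∀ c, PX.pmap (m + 1) (y₀ c) = ∑ d, ⟪vA d, y₀ c⟫ • uA d := by
      intro c
      rw [PSVD.pmap, sum_firstK' hm (fun j => ⟪PX.v j, y₀ c⟫ • PX.u j)]
    have hiden : (∑ c, (⟪z₀ c, mv A' (PX.pmap (m + 1) (y₀ c))⟫).re)
        = ∑ d, (⟪zA d, mv A' (uA d)⟫).re := by
      have h1 : ∀ c, ⟪z₀ c, mv A' (PX.pmap (m + 1) (y₀ c))⟫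
          = ∑ d, ⟪vA d, y₀ c⟫ * ⟪z₀ c, mv A' (uA d)⟫ := by
        intro c
        rw [hpm c, mv_sum' Finset.univ A' (fun d => ⟪vA d, y₀ c⟫ • uA d), inner_sum]
        apply Finset.sum_congr rfl
        intro d _
        rw [mv_smul, inner_smul_right]
      have h2 : ∀ d, ⟪zA d, mv A' (uA d)⟫
          = ∑ c, ⟪vA d, y₀ c⟫ * ⟪z₀ c, mv A' (uA d)⟫ := by
        intro d
        simp only [hzA]
        rw [sum_inner]
        apply Finset.sum_congr rfl
        intro c _
        rw [inner_smul_left, inner_conj_symm]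
      calc ∑ c, (⟪z₀ c, mv A' (PX.pmap (m + 1) (y₀ c))⟫).re
          = ∑ c, ∑ d, (⟪vA d, y₀ c⟫ * ⟪z₀ c, mv A' (uA d)⟫).re := by
            apply Finset.sum_congr rfl
            intro c _
            rw [h1 c, Complex.re_sum]
        _ = ∑ d, ∑ c, (⟪vA d, y₀ c⟫ * ⟪z₀ c, mv A' (uA d)⟫).re := Finset.sum_comm
        _ = ∑ d, (⟪zA d, mv A' (uA d)⟫).re := by
            apply Finset.sum_congr rfl
            intro d _
            rw [h2 d, Complex.re_sum]
    rw [hiden]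
    refine master (psvd A') hm uA zA ?_ ?_ ?_ ?_
    · intro x
      calc ∑ d, ‖⟪uA d, x⟫‖ ^ 2
          = ∑ j ∈ Finset.univ.filter (fun j : Fin n => (j : ℕ) < m + 1), ‖⟪PX.u j, x⟫‖ ^ 2 :=
            (sum_firstK' hm (fun j => ‖⟪PX.u j, x⟫‖ ^ 2)).symm
        _ ≤ ‖x‖ ^ 2 := PX.u_bessel _ x
    · intro x
      have he : ∀ d, ⟪zA d, x⟫ = ⟪vA d, ∑ c, ⟪z₀ c, x⟫ • y₀ c⟫ := by
        intro d
        simp only [hzA]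
        rw [sum_inner, inner_sum]
        apply Finset.sum_congr rfl
        intro c _
        rw [inner_smul_left, inner_smul_right, inner_conj_symm]
        ring
      calc ∑ d, ‖⟪zA d, x⟫‖ ^ 2
          = ∑ d, ‖⟪vA d, ∑ c, ⟪z₀ c, x⟫ • y₀ c⟫‖ ^ 2 :=
            Finset.sum_congr rfl fun d _ => by rw [he d]
        _ = ∑ j ∈ Finset.univ.filter (fun j : Fin n => (j : ℕ) < m + 1),
              ‖⟪PX.v j, ∑ c, ⟪z₀ c, x⟫ • y₀ c⟫‖ ^ 2 :=
            (sum_firstK' hm (fun j => ‖⟪PX.v j, ∑ c, ⟪z₀ c, x⟫ • y₀ c⟫‖ ^ 2)).symm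
        _ ≤ ‖∑ c, ⟪z₀ c, x⟫ • y₀ c‖ ^ 2 := PX.v_bessel _ _
        _ ≤ ∑ c, ‖⟪z₀ c, x⟫‖ ^ 2 := bess_norm_sum hy₀ _
        _ ≤ ‖x‖ ^ 2 := hz₀ x
    · calc ∑ d, ‖uA d‖ ^ 2 ≤ ∑ _d : Fin (m + 1), (1 : ℝ) :=
            Finset.sum_le_sum fun d _ => PX.u_norm_sq_le _
        _ = ((m + 1 : ℕ) : ℝ) := by simp
    · have hzAd : ∀ d, ‖zA d‖ ^ 2 ≤ 1 := by
        intro d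
        simp only [hzA]
        calc ‖∑ c, ⟪y₀ c, vA d⟫ • z₀ c‖ ^ 2 ≤ ∑ c, ‖⟪y₀ c, vA d⟫‖ ^ 2 :=
              bess_norm_sum hz₀ _
          _ ≤ ‖vA d‖ ^ 2 := hy₀ (vA d)
          _ = 1 := PX.v_norm_sq _
      calc ∑ d, ‖zA d‖ ^ 2 ≤ ∑ _d : Fin (m + 1), (1 : ℝ) :=
            Finset.sum_le_sum fun d _ => hzAd d
        _ = ((m + 1 : ℕ) : ℝ) := by simp

lemma boundB (hk : k ≤ n) (hy₀ : Bess y₀) (hz₀ : Bess z₀)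
    (hy₀n : ∀ c, ‖y₀ c‖ ^ 2 ≤ 1) (hz₀n : ∀ c, ‖z₀ c‖ ^ 2 ≤ 1)
    (m : ℕ) (hm : m + 1 ≤ n) (B' : Matrix (Fin n) (Fin n) ℂ) :
    - (∑ c, (⟪z₀ c, PX.pmap (m + 1) (mv B' (y₀ c))⟫).re)
      ≤ sumK (singVals B') (min (m + 1) k) := by
  have hneg : - (∑ c, (⟪z₀ c, PX.pmap (m + 1) (mv B' (y₀ c))⟫).re)
      = ∑ c, (⟪-(PX.qmap (m + 1) (z₀ c)), mv B' (y₀ c)⟫).re := by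
    rw [← Finset.sum_neg_distrib]
    apply Finset.sum_congr rfl
    intro c _
    rw [inner_neg_left, Complex.neg_re, PX.qmap_adj (m + 1) (z₀ c) (mv B' (y₀ c))]
  rw [hneg]
  rcases le_or_gt k (m + 1) with hcase | hcase
  · rw [min_eq_right hcase]
    refine master (psvd B') hk y₀ (fun c => -(PX.qmap (m + 1) (z₀ c))) hy₀
      (bess_neg (PX.bess_qmap hz₀ (m + 1))) ?_ ?_
    · calc ∑ c, ‖y₀ c‖ ^ 2 ≤ ∑ _c : Fin k, (1 : ℝ) := Finset.sum_le_sum fun c _ => hy₀n c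
        _ = (k : ℝ) := by simp
    · calc ∑ c, ‖-(PX.qmap (m + 1) (z₀ c))‖ ^ 2
          = ∑ c, ‖PX.qmap (m + 1) (z₀ c)‖ ^ 2 :=
            Finset.sum_congr rfl fun c _ => by rw [norm_neg]
        _ ≤ ∑ c, ‖z₀ c‖ ^ 2 := PX.sum_qmap_norm_le z₀ (m + 1)
        _ ≤ ∑ _c : Fin k, (1 : ℝ) := Finset.sum_le_sum fun c _ => hz₀n c
        _ = (k : ℝ) := by simp
  · rw [min_eq_left (by omega)]
    set vB : Fin (m + 1) → EuclideanSpace ℂ (Fin n) := fun d => PX.v (Fin.castLE hm d) with hvB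
    set uB : Fin (m + 1) → EuclideanSpace ℂ (Fin n) := fun d => PX.u (Fin.castLE hm d) with huB
    set yB : Fin (m + 1) → EuclideanSpace ℂ (Fin n) :=
      fun d => ∑ c, ⟪z₀ c, uB d⟫ • y₀ c with hyB
    have hqm : ∀ c, PX.qmap (m + 1) (z₀ c) = ∑ d, ⟪uB d, z₀ c⟫ • vB d := by
      intro c
      rw [PSVD.qmap, sum_firstK' hm (fun j => ⟪PX.u j, z₀ c⟫ • PX.v j)]
    have hiden : (∑ c, (⟪-(PX.qmap (m + 1) (z₀ c)), mv B' (y₀ c)⟫).re)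
        = ∑ d, (⟪-(vB d), mv B' (yB d)⟫).re := by
      have h1 : ∀ c, ⟪-(PX.qmap (m + 1) (z₀ c)), mv B' (y₀ c)⟫
          = ∑ d, -(⟪z₀ c, uB d⟫ * ⟪vB d, mv B' (y₀ c)⟫) := by
        intro c
        rw [inner_neg_left, hqm c, sum_inner, ← Finset.sum_neg_distrib]
        apply Finset.sum_congr rfl
        intro d _
        rw [inner_smul_left, inner_conj_symm]
      have h2 : ∀ d, ⟪-(vB d), mv B' (yB d)⟫
          = ∑ c, -(⟪z₀ c, uB d⟫ * ⟪vB d, mv B' (y₀ c)⟫) := by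
        intro d
        simp only [hyB]
        rw [inner_neg_left, mv_sum' Finset.univ B' (fun c => ⟪z₀ c, uB d⟫ • y₀ c), inner_sum,
          ← Finset.sum_neg_distrib]
        apply Finset.sum_congr rfl
        intro c _
        rw [mv_smul, inner_smul_right]
      calc ∑ c, (⟪-(PX.qmap (m + 1) (z₀ c)), mv B' (y₀ c)⟫).re
          = ∑ c, ∑ d, (-(⟪z₀ c, uB d⟫ * ⟪vB d, mv B' (y₀ c)⟫)).re := by
            apply Finset.sum_congr rfl
            intro c _
            rw [h1 c, Complex.re_sum]
        _ = ∑ d, ∑ c, (-(⟪z₀ c, uB d⟫ * ⟪vB d, mv B' (y₀ c)⟫)).re := Finset.sum_comm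
        _ = ∑ d, (⟪-(vB d), mv B' (yB d)⟫).re := by
            apply Finset.sum_congr rfl
            intro d _
            rw [h2 d, Complex.re_sum]
    rw [hiden]
    refine master (psvd B') hm yB (fun d => -(vB d)) ?_ ?_ ?_ ?_
    · intro x
      have he : ∀ d, ⟪yB d, x⟫ = ⟪uB d, ∑ c, ⟪y₀ c, x⟫ • z₀ c⟫ := by
        intro d
        simp only [hyB]
        rw [sum_inner, inner_sum]
        apply Finset.sum_congr rfl
        intro c _
        rw [inner_smul_left, inner_smul_right, inner_conj_symm]
        ring
      calc ∑ d, ‖⟪yB d, x⟫‖ ^ 2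
          = ∑ d, ‖⟪uB d, ∑ c, ⟪y₀ c, x⟫ • z₀ c⟫‖ ^ 2 :=
            Finset.sum_congr rfl fun d _ => by rw [he d]
        _ = ∑ j ∈ Finset.univ.filter (fun j : Fin n => (j : ℕ) < m + 1),
              ‖⟪PX.u j, ∑ c, ⟪y₀ c, x⟫ • z₀ c⟫‖ ^ 2 :=
            (sum_firstK' hm (fun j => ‖⟪PX.u j, ∑ c, ⟪y₀ c, x⟫ • z₀ c⟫‖ ^ 2)).symm
        _ ≤ ‖∑ c, ⟪y₀ c, x⟫ • z₀ c‖ ^ 2 := PX.u_bessel _ _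
        _ ≤ ∑ c, ‖⟪y₀ c, x⟫‖ ^ 2 := bess_norm_sum hz₀ _
        _ ≤ ‖x‖ ^ 2 := hy₀ x
    · apply bess_neg
      intro x
      calc ∑ d, ‖⟪vB d, x⟫‖ ^ 2
          = ∑ j ∈ Finset.univ.filter (fun j : Fin n => (j : ℕ) < m + 1), ‖⟪PX.v j, x⟫‖ ^ 2 :=
            (sum_firstK' hm (fun j => ‖⟪PX.v j, x⟫‖ ^ 2)).symm
        _ ≤ ‖x‖ ^ 2 := PX.v_bessel _ x
    · have hyBd : ∀ d, ‖yB d‖ ^ 2 ≤ 1 := by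
        intro d
        simp only [hyB]
        calc ‖∑ c, ⟪z₀ c, uB d⟫ • y₀ c‖ ^ 2 ≤ ∑ c, ‖⟪z₀ c, uB d⟫‖ ^ 2 :=
              bess_norm_sum hy₀ _
          _ ≤ ‖uB d‖ ^ 2 := hz₀ (uB d)
          _ ≤ 1 := PX.u_norm_sq_le _
      calc ∑ d, ‖yB d‖ ^ 2 ≤ ∑ _d : Fin (m + 1), (1 : ℝ) :=
            Finset.sum_le_sum fun d _ => hyBd d
        _ = ((m + 1 : ℕ) : ℝ) := by simp
    · calc ∑ d, ‖-(vB d)‖ ^ 2 = ∑ d, ‖vB d‖ ^ 2 :=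
            Finset.sum_congr rfl fun d _ => by rw [norm_neg]
        _ = ∑ _d : Fin (m + 1), (1 : ℝ) :=
            Finset.sum_congr rfl fun d _ => PX.v_norm_sq _
        _ ≤ ((m + 1 : ℕ) : ℝ) := by simp

end bounds
end GC

local notation "⟪" x ", " y "⟫" => (inner ℂ x y : ℂ)

open GC in
/-- σ(AX - XB) ≺_w 2 δ(A,B) σ(X). -/
theorem singVals_generalized_commutator (n : ℕ) (A B X : Matrix (Fin n) (Fin n) ℂ) :
    WeakMaj (singVals (A * X - X * B))
      (fun i => 2 * sortDesc (discVals2 A B) i * sortDesc (singVals X) i) := by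
  classical
  intro k
  rcases le_or_gt k n with hk | hk
  case inr =>
    rw [sumK_of_gt hk, sumK_of_gt hk]
  case inl =>
    set M₀ := A * X - X * B with hM₀
    set PM := psvd M₀ with hPM
    set PX := psvd X with hPX
    set y₀ : Fin k → EuclideanSpace ℂ (Fin n) :=
      fun c => if PM.sv (Fin.castLE hk c) = 0 then 0 else PM.v (Fin.castLE hk c) with hy₀def
    set z₀ : Fin k → EuclideanSpace ℂ (Fin n) := fun c => PM.u (Fin.castLE hk c) with hz₀def
    have hy₀ : Bess y₀ := by
      intro x
      have h1 : ∀ c : Fin k, ‖⟪y₀ c, x⟫‖ ^ 2 ≤ ‖⟪PM.v (Fin.castLE hk c), x⟫‖ ^ 2 := by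
        intro c
        simp only [hy₀def]
        by_cases h : PM.sv (Fin.castLE hk c) = 0
        · rw [if_pos h]
          have hz : (inner ℂ (0 : EuclideanSpace ℂ (Fin n)) x : ℂ) = 0 := inner_zero_left _
          rw [hz, norm_zero]
          have hnn := sq_nonneg ‖⟪PM.v (Fin.castLE hk c), x⟫‖
          simpa using hnn
        · rw [if_neg h]
      calc ∑ c, ‖⟪y₀ c, x⟫‖ ^ 2 ≤ ∑ c, ‖⟪PM.v (Fin.castLE hk c), x⟫‖ ^ 2 :=
            Finset.sum_le_sum fun c _ => h1 c
        _ = ∑ j ∈ Finset.univ.filter (fun j : Fin n => (j : ℕ) < k), ‖⟪PM.v j, x⟫‖ ^ 2 :=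
            (sum_firstK' hk (fun j => ‖⟪PM.v j, x⟫‖ ^ 2)).symm
        _ ≤ ‖x‖ ^ 2 := PM.v_bessel _ x
    have hz₀ : Bess z₀ := by
      intro x
      calc ∑ c, ‖⟪z₀ c, x⟫‖ ^ 2
          = ∑ j ∈ Finset.univ.filter (fun j : Fin n => (j : ℕ) < k), ‖⟪PM.u j, x⟫‖ ^ 2 := by
            simp only [hz₀def]
            exact (sum_firstK' hk (fun j => ‖⟪PM.u j, x⟫‖ ^ 2)).symm
        _ ≤ ‖x‖ ^ 2 := PM.u_bessel _ x
    have hy₀n : ∀ c, ‖y₀ c‖ ^ 2 ≤ 1 := by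
      intro c
      simp only [hy₀def]
      by_cases h : PM.sv (Fin.castLE hk c) = 0
      · rw [if_pos h]; simp
      · rw [if_neg h, PM.v_norm_sq]
    have hz₀n : ∀ c, ‖z₀ c‖ ^ 2 ≤ 1 := fun c => PM.u_norm_sq_le _
    have hval : ∀ c : Fin k, (⟪z₀ c, mv M₀ (y₀ c)⟫).re = PM.sv (Fin.castLE hk c) := by
      intro c
      simp only [hy₀def, hz₀def]
      by_cases h : PM.sv (Fin.castLE hk c) = 0
      · rw [if_pos h, h]
        have h0 : mv M₀ (0 : EuclideanSpace ℂ (Fin n)) = 0 := by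
          simp [mv]
        rw [h0]
        simp
      · rw [if_neg h, PM.mv_v, inner_smul_right]
        have hu := PM.u_orth (Fin.castLE hk c) (Fin.castLE hk c) h h
        rw [if_pos rfl] at hu
        rw [hu, mul_one]
        simp
    have hLHS : sumK (singVals M₀) k = ∑ c, (⟪z₀ c, mv M₀ (y₀ c)⟫).re := by
      rw [PM.sumK_eq hk]
      exact (Finset.sum_congr rfl fun c _ => hval c).symm
    have hdecomp : ∀ c : Fin k, mv M₀ (y₀ c)
        = ∑ m ∈ Finset.range n, ((PX.sig m - PX.sig (m + 1) : ℝ) : ℂ) •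
            (mv A (PX.pmap (m + 1) (y₀ c)) - PX.pmap (m + 1) (mv B (y₀ c))) := by
      intro c
      have h1 : mv M₀ (y₀ c) = mv A (mv X (y₀ c)) - mv X (mv B (y₀ c)) := by
        rw [hM₀, mv_sub, mv_mul, mv_mul]
      rw [h1, PX.mv_decomp (y₀ c), PX.mv_decomp (mv B (y₀ c)),
        mv_sum' (Finset.range n) A _, ← Finset.sum_sub_distrib]
      apply Finset.sum_congr rfl
      intro m _
      rw [mv_smul, ← smul_sub]
    have hV : ∑ c, (⟪z₀ c, mv M₀ (y₀ c)⟫).re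
        = ∑ m ∈ Finset.range n, (PX.sig m - PX.sig (m + 1)) *
            (∑ c, (⟪z₀ c, mv A (PX.pmap (m + 1) (y₀ c))
              - PX.pmap (m + 1) (mv B (y₀ c))⟫).re) := by
      calc ∑ c, (⟪z₀ c, mv M₀ (y₀ c)⟫).re
          = ∑ c, ∑ m ∈ Finset.range n, (PX.sig m - PX.sig (m + 1)) *
              (⟪z₀ c, mv A (PX.pmap (m + 1) (y₀ c))
                - PX.pmap (m + 1) (mv B (y₀ c))⟫).re := by
            apply Finset.sum_congr rfl
            intro c _
            rw [hdecomp c, inner_sum, Complex.re_sum]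
            apply Finset.sum_congr rfl
            intro m _
            rw [inner_smul_right, Complex.re_ofReal_mul]
        _ = ∑ m ∈ Finset.range n, ∑ c, (PX.sig m - PX.sig (m + 1)) *
              (⟪z₀ c, mv A (PX.pmap (m + 1) (y₀ c))
                - PX.pmap (m + 1) (mv B (y₀ c))⟫).re := Finset.sum_comm
        _ = _ := Finset.sum_congr rfl fun m _ => (Finset.mul_sum _ _ _).symm
    have hW : ∀ m ∈ Finset.range n,
        (∑ c, (⟪z₀ c, mv A (PX.pmap (m + 1) (y₀ c))
          - PX.pmap (m + 1) (mv B (y₀ c))⟫).re)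
          ≤ 2 * discNorm2 A B (min (m + 1) k) := by
      intro m hmem
      have hm : m + 1 ≤ n := Finset.mem_range.mp hmem
      have key : ∀ α : ℂ,
          (∑ c, (⟪z₀ c, mv A (PX.pmap (m + 1) (y₀ c))
            - PX.pmap (m + 1) (mv B (y₀ c))⟫).re)
            ≤ kyFan (A - α • 1) (min (m + 1) k) + kyFan (B - α • 1) (min (m + 1) k) := by
        intro α
        have halg : ∀ c : Fin k, mv A (PX.pmap (m + 1) (y₀ c)) - PX.pmap (m + 1) (mv B (y₀ c))
            = mv (A - α • 1) (PX.pmap (m + 1) (y₀ c))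
              - PX.pmap (m + 1) (mv (B - α • 1) (y₀ c)) := by
          intro c
          rw [mv_sub A (α • 1), mv_sub B (α • 1), mv_smulOne, mv_smulOne,
            PX.pmap_sub, PX.pmap_smulC]
          abel
        have hsplit2 : (∑ c, (⟪z₀ c, mv A (PX.pmap (m + 1) (y₀ c))
            - PX.pmap (m + 1) (mv B (y₀ c))⟫).re)
            = (∑ c, (⟪z₀ c, mv (A - α • 1) (PX.pmap (m + 1) (y₀ c))⟫).re)
              - ∑ c, (⟪z₀ c, PX.pmap (m + 1) (mv (B - α • 1) (y₀ c))⟫).re := by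
          rw [← Finset.sum_sub_distrib]
          apply Finset.sum_congr rfl
          intro c _
          rw [halg c, inner_sub_right, Complex.sub_re]
        rw [hsplit2]
        have hA := boundA PX hk hy₀ hz₀ hy₀n hz₀n m hm (A - α • 1)
        have hB := boundB PX hk hy₀ hz₀ hy₀n hz₀n m hm (B - α • 1)
        show _ ≤ sumK (singVals (A - α • 1)) (min (m + 1) k)
          + sumK (singVals (B - α • 1)) (min (m + 1) k)
        linarith
      have h2 : (∑ c, (⟪z₀ c, mv A (PX.pmap (m + 1) (y₀ c))
          - PX.pmap (m + 1) (mv B (y₀ c))⟫).re) / 2 ≤ discNorm2 A B (min (m + 1) k) :=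
        le_discNorm2 A B _ (fun α => by have := key α; linarith)
      linarith
    have hfin : ∑ m ∈ Finset.range n,
        (PX.sig m - PX.sig (m + 1)) * (2 * discNorm2 A B (min (m + 1) k))
        = ∑ i ∈ Finset.range k,
            (2 * (discNorm2 A B (i + 1) - discNorm2 A B i)) * PX.sig i :=
      abel_id (discNorm2 A B) PX.sig n k hk (discNorm2_zero A B) (PX.sig_top le_rfl)
    have hg : (fun i : Fin n => 2 * sortDesc (discVals2 A B) i * sortDesc (singVals X) i)
        = fun i : Fin n => 2 * discVals2 A B i * PX.sv i := by
      funext i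
      rw [sortDesc_eq_self (discVals2_anti A B), ← PX.sort_eq]
    have hganti : Antitone (fun i : Fin n => 2 * discVals2 A B i * PX.sv i) := by
      intro i j hij
      have h1 := discVals2_anti A B hij
      have h2 := PX.anti hij
      have h3 := discVals2_nonneg A B j
      have h4 := PX.sv_nonneg j
      have h5 := discVals2_nonneg A B i
      have h6 := PX.sv_nonneg i
      simp only
      nlinarith
    have hRHS : sumK (fun i : Fin n =>
          2 * sortDesc (discVals2 A B) i * sortDesc (singVals X) i) k
        = ∑ i ∈ Finset.range k,
            (2 * (discNorm2 A B (i + 1) - discNorm2 A B i)) * PX.sig i := by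
      rw [hg, sumK_antitone_eq hganti hk,
        ← Fin.sum_univ_eq_sum_range
          (fun i => (2 * (discNorm2 A B (i + 1) - discNorm2 A B i)) * PX.sig i) k]
      apply Finset.sum_congr rfl
      intro c _
      have e1 : discVals2 A B (Fin.castLE hk c)
          = discNorm2 A B ((c : ℕ) + 1) - discNorm2 A B (c : ℕ) := rfl
      have e2 : PX.sig (c : ℕ) = PX.sv (Fin.castLE hk c) := by
        rw [PSVD.sig, dif_pos (lt_of_lt_of_le c.2 hk)]
        rfl
      rw [e1, e2]
    calc sumK (singVals M₀) k
        = ∑ c, (⟪z₀ c, mv M₀ (y₀ c)⟫).re := hLHS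
      _ = ∑ m ∈ Finset.range n, (PX.sig m - PX.sig (m + 1)) *
            (∑ c, (⟪z₀ c, mv A (PX.pmap (m + 1) (y₀ c))
              - PX.pmap (m + 1) (mv B (y₀ c))⟫).re) := hV
      _ ≤ ∑ m ∈ Finset.range n, (PX.sig m - PX.sig (m + 1)) *
            (2 * discNorm2 A B (min (m + 1) k)) :=
          Finset.sum_le_sum fun m hmem =>
            mul_le_mul_of_nonneg_left (hW m hmem) (PX.sig_step_nonneg m)
      _ = ∑ i ∈ Finset.range k,
            (2 * (discNorm2 A B (i + 1) - discNorm2 A B i)) * PX.sig i := hfin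
      _ = sumK (fun i : Fin n =>
            2 * sortDesc (discVals2 A B) i * sortDesc (singVals X) i) k := hRHS.symm
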